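/- Let (f_n) be a frame with analysis operator U such that U*U ≥ I (lower frame bound A ≥ 1) and dim(Im(U*U − I)) ≤ dim(Ker U*). Then there exists an isometry V : H → ℓ² with V*U = I; i.e. (f_n) possesses a Parseval dual frame. -/

import Mathlib

set_option maxHeartbeats 2000000
set_option synthInstance.maxHeartbeats 1000000

open scoped InnerProductSpace

universe u

noncomputable section

abbrev ell2 : Type := lp (fun _ : ℕ => ℂ) 2

def IsFrame {H : Type*} [NormedAddCommGroup H] [InnerProductSpace ℂ H]
    (f : ℕ → H) : Prop :=
  ∃ A B : ℝ, 0 < A ∧ 0 < B ∧ ∀ x : H,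
    A * ‖x‖ ^ 2 ≤ ∑' n, ‖⟪x, f n⟫_ℂ‖ ^ 2 ∧ ∑' n, ‖⟪x, f n⟫_ℂ‖ ^ 2 ≤ B * ‖x‖ ^ 2

def IsAnalysisOp {H : Type*} [NormedAddCommGroup H] [InnerProductSpace ℂ H]
    (f : ℕ → H) (U : H →L[ℂ] ell2) : Prop :=
  ∀ (x : H) (n : ℕ), (U x : ∀ _ : ℕ, ℂ) n = ⟪x, f n⟫_ℂ

lemma separable_ell2 : TopologicalSpace.SeparableSpace ell2 := by
  have h1 : TopologicalSpace.IsSeparable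
      (Set.range (fun n : ℕ => lp.single 2 n (1:ℂ)) : Set ell2) :=
    (Set.countable_range _).isSeparable
  have h2 := h1.span (R := ℂ)
  have hdense : Dense (Submodule.span ℂ
      (Set.range (fun n : ℕ => lp.single 2 n (1:ℂ))) : Set ell2) := by
    intro f
    have hs := lp.hasSum_single (E := fun _ : ℕ => ℂ) (p := 2) (by norm_num) f
    refine mem_closure_of_tendsto hs.tendsto_sum_nat (Filter.Eventually.of_forall ?_)
    intro n
    refine Submodule.sum_mem _ fun i _ => ?_
    have : lp.single (E := fun _ : ℕ => ℂ) 2 i (f i) = (f i) • lp.single 2 i (1:ℂ) := by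
      rw [← lp.single_smul]
      norm_num
    rw [this]
    exact Submodule.smul_mem _ _ (Submodule.subset_span (Set.mem_range_self i))
  have h3 : TopologicalSpace.IsSeparable (Set.univ : Set ell2) := by
    have := h2.closure
    rwa [hdense.closure_eq] at this
  exact (TopologicalSpace.isSeparable_univ_iff).mp h3

lemma countable_of_orthonormal {E : Type*} [NormedAddCommGroup E] [InnerProductSpace ℂ E]
    [TopologicalSpace.SeparableSpace E] {s : Set E}
    (hs : Orthonormal ℂ ((↑) : s → E)) : s.Countable := by
  have hdist : ∀ x ∈ s, ∀ y ∈ s, x ≠ y → 1 ≤ dist x y := by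
    intro x hx y hy hxy
    have hinner : ⟪x, y⟫_ℂ = 0 := by
      have := hs.2 (i := ⟨x, hx⟩) (j := ⟨y, hy⟩) (by simpa using hxy)
      simpa using this
    have hnx : ‖x‖ = 1 := by simpa using hs.1 ⟨x, hx⟩
    have hny : ‖y‖ = 1 := by simpa using hs.1 ⟨y, hy⟩
    have h2 : ‖x - y‖ ^ 2 = 2 := by
      rw [@norm_sub_sq ℂ]
      simp [hnx, hny, hinner]; norm_num
    rw [dist_eq_norm]
    nlinarith [norm_nonneg (x - y)]
  have hpd : s.PairwiseDisjoint (fun x => Metric.ball x (2⁻¹ : ℝ)) := by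
    intro x hx y hy hxy
    exact Metric.ball_disjoint_ball (by linarith [hdist x hx y hy hxy])
  exact hpd.countable_of_isOpen (fun x _ => Metric.isOpen_ball)
    (fun x _ => Metric.nonempty_ball.mpr (by norm_num))

lemma exists_linearIsometry_range_le {E : Type*} [NormedAddCommGroup E]
    [InnerProductSpace ℂ E] [CompleteSpace E]
    {ι : Type*} (v : ι → E) (hv : Orthonormal ℂ v) (N : Submodule ℂ E)
    (hN : IsClosed (N : Set E)) (hvN : ∀ i, v i ∈ N) :
    ∃ W : lp (fun _ : ι => ℂ) 2 →ₗᵢ[ℂ] E, ∀ f, W f ∈ N := by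
  have fam := hv.orthogonalFamily
  refine ⟨fam.linearIsometry, fun f => ?_⟩
  have hmem : fam.linearIsometry f ∈ LinearMap.range fam.linearIsometry.toLinearMap :=
    ⟨f, rfl⟩
  rw [fam.range_linearIsometry] at hmem
  refine Submodule.topologicalClosure_minimal _ ?_ hN hmem
  refine iSup_le fun i => ?_
  rintro x ⟨c, rfl⟩
  simp only [LinearIsometry.coe_toLinearMap, LinearIsometry.toSpanSingleton_apply]
  exact N.smul_mem _ (hvN i)

lemma hilbert_card_le {H : Type u} [NormedAddCommGroup H] [InnerProductSpace ℂ H]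
    [CompleteSpace H] [TopologicalSpace.SeparableSpace H]
    {R K : Submodule ℂ H} (hRK : R.topologicalClosure = K)
    {N : Submodule ℂ ell2}
    (hdim : Cardinal.lift.{0} (Module.rank ℂ R) ≤ Cardinal.lift.{u} (Module.rank ℂ N))
    {w₁ : Set K} (hw₁ : Orthonormal ℂ ((↑) : w₁ → K))
    {w₂ : Set N} (b₂ : HilbertBasis w₂ ℂ N) :
    Nonempty (w₁ ↪ w₂) := by
  rw [← Cardinal.lift_mk_le']
  cases finite_or_infinite w₂ with
  | inr hinf =>
      have hsc : SecondCountableTopology H := UniformSpace.secondCountable_of_separable H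
      haveI := hsc
      haveI : SecondCountableTopology K := inferInstance
      haveI : TopologicalSpace.SeparableSpace K := inferInstance
      have hc : w₁.Countable := countable_of_orthonormal hw₁
      have h1 : (Cardinal.mk w₁) ≤ Cardinal.aleph0 := hc.le_aleph0
      have h2 : Cardinal.aleph0 ≤ Cardinal.mk w₂ := Cardinal.aleph0_le_mk w₂
      calc Cardinal.lift.{0} (Cardinal.mk w₁) ≤ Cardinal.lift.{0} Cardinal.aleph0 :=
            Cardinal.lift_le.mpr h1
        _ = Cardinal.aleph0 := by simp
        _ ≤ Cardinal.lift.{u} (Cardinal.mk w₂) := by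
            simpa using Cardinal.lift_le.mpr h2
  | inl hfin =>
      -- N is finite dimensional with rank N ≤ #w₂
      have hspan : Submodule.span ℂ (Set.range ⇑b₂) = ⊤ := by
        have hd := b₂.dense_span
        have hcl : IsClosed ((Submodule.span ℂ (Set.range ⇑b₂) : Submodule ℂ N) : Set N) := by
          have : (Set.range ⇑b₂).Finite := Set.finite_range _
          have : FiniteDimensional ℂ (Submodule.span ℂ (Set.range ⇑b₂)) :=
            FiniteDimensional.span_of_finite ℂ this
          exact Submodule.closed_of_finiteDimensional _
        rwa [IsClosed.submodule_topologicalClosure_eq hcl] at hd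
      have hrankN : Module.rank ℂ N ≤ Cardinal.mk w₂ := by
        have := rank_span_le (R := ℂ) (M := N) (Set.range ⇑b₂)
        rw [hspan, rank_top] at this
        refine this.trans ?_
        simpa using Cardinal.mk_range_le
      have hNfin : Module.rank ℂ N < Cardinal.aleph0 := by
        refine lt_of_le_of_lt hrankN ?_
        exact Cardinal.lt_aleph0_of_finite _
      -- rank R < ℵ₀, so R is finite dimensional and closed, K = R
      have hRfin : Module.rank ℂ R < Cardinal.aleph0 := by
        have : Cardinal.lift.{0} (Module.rank ℂ R) < Cardinal.aleph0 := by
          refine lt_of_le_of_lt hdim ?_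
          simpa using hNfin
        simpa using this
      have : FiniteDimensional ℂ R := Module.rank_lt_aleph0_iff.mp hRfin
      have hKR : R = K := by
        rw [← hRK, IsClosed.submodule_topologicalClosure_eq (Submodule.closed_of_finiteDimensional R)]
      have h1 : Cardinal.mk w₁ ≤ Module.rank ℂ K := by
        have := hw₁.linearIndependent.cardinal_le_rank
        simpa using this
      have h2 : Module.rank ℂ K = Module.rank ℂ R := by rw [hKR]
      calc Cardinal.lift.{0} (Cardinal.mk w₁)
          ≤ Cardinal.lift.{0} (Module.rank ℂ R) := by
            rw [← h2]; exact Cardinal.lift_le.mpr h1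
        _ ≤ Cardinal.lift.{u} (Module.rank ℂ N) := hdim
        _ ≤ Cardinal.lift.{u} (Cardinal.mk w₂) := Cardinal.lift_le.mpr hrankN

/-- If `U*U ≥ I` and `dim Im(U*U - I) ≤` the excess, then the frame possesses a
Parseval dual, i.e. there is an isometry `V` with `V* U = I`. -/
theorem exists_parseval_dual
    {H : Type u} [NormedAddCommGroup H] [InnerProductSpace ℂ H] [CompleteSpace H]
    (f : ℕ → H) (hf : IsFrame f)
    (U : H →L[ℂ] ell2) (hU : IsAnalysisOp f U)
    (hA : ∀ x : H, ‖x‖ ^ 2 ≤ ‖U x‖ ^ 2)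
    (hdim : Cardinal.lift.{0} (Module.rank ℂ (LinearMap.range
        ((ContinuousLinearMap.adjoint U) ∘L U - ContinuousLinearMap.id ℂ H : H →ₗ[ℂ] H))) ≤
      Cardinal.lift.{u} (Module.rank ℂ (LinearMap.ker (ContinuousLinearMap.adjoint U : ell2 →ₗ[ℂ] H)))) :
    ∃ V : H →L[ℂ] ell2,
      (ContinuousLinearMap.adjoint V) ∘L V = ContinuousLinearMap.id ℂ H ∧
      (ContinuousLinearMap.adjoint V) ∘L U = ContinuousLinearMap.id ℂ H := by
  classical
  set S : H →L[ℂ] H := (ContinuousLinearMap.adjoint U) ∘L U with hSdef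
  -- basic inner product identity
  have hSip : ∀ x y : H, ⟪S x, y⟫_ℂ = ⟪U x, U y⟫_ℂ := by
    intro x y
    rw [hSdef]
    simp only [ContinuousLinearMap.comp_apply]
    exact ContinuousLinearMap.adjoint_inner_left U y (U x)
  have hSsa : IsSelfAdjoint S := by
    rw [IsSelfAdjoint, hSdef, ContinuousLinearMap.star_eq_adjoint,
      ContinuousLinearMap.adjoint_comp, ContinuousLinearMap.adjoint_adjoint]
  have hSsym : ∀ x y : H, ⟪S x, y⟫_ℂ = ⟪x, S y⟫_ℂ := by
    intro x y
    exact (ContinuousLinearMap.isSelfAdjoint_iff_isSymmetric.mp hSsa) x y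
  -- S is invertible
  have hSunit : IsUnit S := by
    refine ContinuousLinearMap.isUnit_of_forall_le_norm_inner_map S (c := 1) one_pos ?_
    intro x
    rw [hSip x x, inner_self_eq_norm_sq_to_K]
    simp only [NNReal.coe_one, mul_one, norm_pow, RCLike.norm_ofReal, abs_norm]
    exact hA x
  obtain ⟨u, hu⟩ := hSunit
  set Sinv : H →L[ℂ] H := ((u⁻¹ : (H →L[ℂ] H)ˣ) : H →L[ℂ] H) with hSinvdef
  have h1 : S * Sinv = 1 := by rw [← hu, hSinvdef]; exact u.mul_inv
  have h2 : Sinv * S = 1 := by rw [← hu, hSinvdef]; exact u.inv_mul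
  have h1' : ∀ x, S (Sinv x) = x := by
    intro x
    have := ContinuousLinearMap.ext_iff.mp h1 x
    simpa [ContinuousLinearMap.mul_apply] using this
  have h2' : ∀ x, Sinv (S x) = x := by
    intro x
    have := ContinuousLinearMap.ext_iff.mp h2 x
    simpa [ContinuousLinearMap.mul_apply] using this
  have hSinvsa : IsSelfAdjoint Sinv := by
    have : star Sinv = star Sinv * (S * Sinv) := by rw [h1, mul_one]
    calc star Sinv = star Sinv * (S * Sinv) := by rw [h1, mul_one]
      _ = (star Sinv * star S) * Sinv := by rw [hSsa.star_eq, mul_assoc]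
      _ = star (S * Sinv) * Sinv := by rw [star_mul]
      _ = Sinv := by rw [h1, star_one, one_mul]
  have hSinvsym : ∀ x y : H, ⟪Sinv x, y⟫_ℂ = ⟪x, Sinv y⟫_ℂ := by
    intro x y
    exact (ContinuousLinearMap.isSelfAdjoint_iff_isSymmetric.mp hSinvsa) x y
  -- T = 1 - S⁻¹ is positive
  set T : H →L[ℂ] H := 1 - Sinv with hTdef
  have hTsa : IsSelfAdjoint T := (IsSelfAdjoint.one (R := H →L[ℂ] H)).sub hSinvsa
  have hTapp : ∀ x, T x = x - Sinv x := by
    intro x; rw [hTdef]; simp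
  have hTpos : (0 : H →L[ℂ] H) ≤ T := by
    rw [ContinuousLinearMap.nonneg_iff_isPositive]
    refine ⟨ContinuousLinearMap.isSelfAdjoint_iff_isSymmetric.mp hTsa, fun x => ?_⟩
    rw [ContinuousLinearMap.reApplyInnerSelf_apply]
    rw [hTapp, inner_sub_left]
    rw [map_sub]
    set y := Sinv x with hy
    have hxy : S y = x := h1' x
    have hyx : ‖y‖ ≤ ‖x‖ := by
      have h3 : ‖y‖ ^ 2 ≤ ‖U y‖ ^ 2 := hA y
      have h4 : (‖U y‖ : ℝ) ^ 2 = RCLike.re ⟪S y, y⟫_ℂ := by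
        rw [hSip, inner_self_eq_norm_sq]
      have h5 : RCLike.re ⟪S y, y⟫_ℂ ≤ ‖S y‖ * ‖y‖ := by
        refine le_trans (RCLike.re_le_norm _) ?_
        exact norm_inner_le_norm _ _
      rw [← hxy]
      nlinarith [norm_nonneg y, norm_nonneg (S y)]
    have key : RCLike.re ⟪y, x⟫_ℂ ≤ ‖x‖ ^ 2 := by
      calc RCLike.re ⟪y, x⟫_ℂ ≤ ‖⟪y, x⟫_ℂ‖ := RCLike.re_le_norm _
        _ ≤ ‖y‖ * ‖x‖ := norm_inner_le_norm _ _
        _ ≤ ‖x‖ * ‖x‖ := by nlinarith [norm_nonneg x]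
        _ = ‖x‖ ^ 2 := (sq ‖x‖).symm
    have hxx : RCLike.re ⟪x, x⟫_ℂ = ‖x‖ ^ 2 := inner_self_eq_norm_sq x
    linarith
  -- the square root G
  set G : H →L[ℂ] H := CFC.sqrt T with hGdef
  have hGnn : (0 : H →L[ℂ] H) ≤ G := CFC.sqrt_nonneg T
  have hGsa : IsSelfAdjoint G :=
    ((ContinuousLinearMap.nonneg_iff_isPositive G).mp hGnn).isSelfAdjoint
  have hGsym : ∀ x y : H, ⟪G x, y⟫_ℂ = ⟪x, G y⟫_ℂ := by
    intro x y
    exact (ContinuousLinearMap.isSelfAdjoint_iff_isSymmetric.mp hGsa) x y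
  have hG2 : ∀ x, G (G x) = T x := by
    intro x
    have : G * G = T := by rw [hGdef, ← pow_two]; exact CFC.sq_sqrt T hTpos
    have := ContinuousLinearMap.ext_iff.mp this x
    simpa [ContinuousLinearMap.mul_apply] using this
  -- aop = S - 1
  have hdim' : Cardinal.lift.{0} (Module.rank ℂ (LinearMap.range (S - 1 : H →ₗ[ℂ] H))) ≤
      Cardinal.lift.{u} (Module.rank ℂ (LinearMap.ker (ContinuousLinearMap.adjoint U : ell2 →ₗ[ℂ] H))) := by
    exact hdim
  set aop : H →L[ℂ] H := S - 1 with haopdef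
  have haopapp : ∀ x, aop x = S x - x := by intro x; rw [haopdef]; simp
  have haopsa : IsSelfAdjoint aop := hSsa.sub (IsSelfAdjoint.one (R := H →L[ℂ] H))
  have haopsym : ∀ x y : H, ⟪aop x, y⟫_ℂ = ⟪x, aop y⟫_ℂ := by
    intro x y
    exact (ContinuousLinearMap.isSelfAdjoint_iff_isSymmetric.mp haopsa) x y
  have hTker : ∀ x, T x = 0 ↔ aop x = 0 := by
    intro x
    rw [hTapp, haopapp]
    constructor
    · intro h
      have hsx : Sinv x = x := by
        have := sub_eq_zero.mp h; exact this.symm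
      have := congrArg S hsx
      rw [h1'] at this
      rw [← this]; simp
    · intro h
      have hsx : S x = x := by
        have := sub_eq_zero.mp h; exact this
      have := congrArg Sinv hsx
      rw [h2'] at this
      rw [← this]; simp
  have hGker : ∀ x, aop x = 0 → G x = 0 := by
    intro x hx
    have hT0 : T x = 0 := (hTker x).mpr hx
    have : ⟪G x, G x⟫_ℂ = 0 := by
      rw [hGsym, hG2, hT0, inner_zero_right]
    exact inner_self_eq_zero.mp this
  -- the subspaces
  set K : Submodule ℂ H := (LinearMap.ker (aop : H →ₗ[ℂ] H))ᗮ with hKdef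
  set N : Submodule ℂ ell2 := LinearMap.ker (ContinuousLinearMap.adjoint U : ell2 →ₗ[ℂ] H) with hNdef
  have hGmem : ∀ x, G x ∈ K := by
    intro x
    rw [hKdef, Submodule.mem_orthogonal]
    intro y hy
    have hy0 : aop y = 0 := LinearMap.mem_ker.mp hy
    rw [← hGsym, hGker y hy0, inner_zero_left]
  have hclosure : (LinearMap.range (aop : H →ₗ[ℂ] H)).topologicalClosure = K := by
    have horth : (LinearMap.range (aop : H →ₗ[ℂ] H))ᗮ = LinearMap.ker (aop : H →ₗ[ℂ] H) := by
      ext y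
      rw [Submodule.mem_orthogonal, LinearMap.mem_ker]
      constructor
      · intro h
        have h2 : ∀ x : H, ⟪x, aop y⟫_ℂ = 0 := by
          intro x
          rw [← haopsym]
          exact h (aop x) ⟨x, rfl⟩
        exact inner_self_eq_zero.mp (h2 (aop y))
      · intro h u hu
        obtain ⟨x, rfl⟩ := hu
        simp only [ContinuousLinearMap.coe_coe] at h ⊢
        rw [haopsym, h, inner_zero_right]
    rw [hKdef, ← horth, Submodule.orthogonal_orthogonal_eq_closure]
  -- separability
  haveI hsep2 : TopologicalSpace.SeparableSpace ell2 := separable_ell2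
  haveI hsc2 : SecondCountableTopology ell2 := UniformSpace.secondCountable_of_separable ell2
  have hanti : AntilipschitzWith 1 U := by
    refine ContinuousLinearMap.antilipschitz_of_bound U ?_
    intro x
    have := hA x
    have h0 : (0:ℝ) ≤ ‖x‖ := norm_nonneg x
    have h1 : (0:ℝ) ≤ ‖U x‖ := norm_nonneg (U x)
    rw [NNReal.coe_one, one_mul]
    nlinarith
  have hemb : Topology.IsEmbedding U := (hanti.isUniformEmbedding U.uniformContinuous).isEmbedding
  haveI hscH : SecondCountableTopology H := hemb.secondCountableTopology
  haveI hsepH : TopologicalSpace.SeparableSpace H := inferInstance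
  -- Hilbert bases
  haveI : CompleteSpace K := (Submodule.isClosed_orthogonal _).completeSpace_coe
  haveI : CompleteSpace N := (ContinuousLinearMap.isClosed_ker _).completeSpace_coe
  obtain ⟨w₁, b₁, hb₁⟩ := exists_hilbertBasis ℂ K
  obtain ⟨w₂, b₂, hb₂⟩ := exists_hilbertBasis ℂ N
  have hw₁on : Orthonormal ℂ ((↑) : w₁ → K) := hb₁ ▸ b₁.orthonormal
  obtain ⟨j⟩ := hilbert_card_le hclosure hdim' hw₁on b₂
  -- the orthonormal family in N ⊆ ell2
  have hw₂on : Orthonormal ℂ ((↑) : w₂ → N) := hb₂ ▸ b₂.orthonormal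
  set v : w₁ → ell2 := fun i => (((j i : w₂) : N) : ell2) with hvdef
  have hvon : Orthonormal ℂ v := by
    constructor
    · intro i
      have := hw₂on.1 (j i)
      simpa [hvdef] using this
    · intro i i' hii'
      have : ⟪((j i : w₂) : N), ((j i' : w₂) : N)⟫_ℂ = 0 :=
        hw₂on.2 (fun h => hii' (j.injective h))
      simpa [hvdef, Submodule.coe_inner] using this
  have hvN : ∀ i, v i ∈ N := fun i => ((j i : w₂) : N).2
  obtain ⟨W, hW⟩ := exists_linearIsometry_range_le v hvon N
    (ContinuousLinearMap.isClosed_ker _) hvN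
  -- the operator E
  set Gres : H →L[ℂ] K := ContinuousLinearMap.codRestrict G K hGmem with hGres
  set Eop : H →L[ℂ] ell2 :=
    W.toContinuousLinearMap ∘L (b₁.repr.toLinearIsometry.toContinuousLinearMap ∘L Gres)
    with hEopdef
  have hEapp : ∀ x, Eop x = W (b₁.repr (Gres x)) := by
    intro x; rw [hEopdef]; rfl
  have hEopN : ∀ x, Eop x ∈ N := by intro x; rw [hEapp]; exact hW _

  have hEopInner : ∀ x y, ⟪Eop x, Eop y⟫_ℂ = ⟪G x, G y⟫_ℂ := by
    intro x y
    rw [hEapp, hEapp, W.inner_map_map, b₁.repr.inner_map_map]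
    rfl
  have hUE : ∀ (z : H) (x : H), ⟪U z, Eop x⟫_ℂ = 0 := by
    intro z x
    have h0 : ContinuousLinearMap.adjoint U (Eop x) = 0 := LinearMap.mem_ker.mp (hEopN x)
    rw [← ContinuousLinearMap.adjoint_inner_right, h0, inner_zero_right]
  -- the candidate V
  set Vop : H →L[ℂ] ell2 := (U ∘L Sinv) + Eop with hVopdef
  have hVapp : ∀ x, Vop x = U (Sinv x) + Eop x := by
    intro x; rw [hVopdef]; simp
  refine ⟨Vop, ?_, ?_⟩
  · apply ContinuousLinearMap.ext
    intro x
    apply ext_inner_right ℂ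
    intro y
    rw [ContinuousLinearMap.comp_apply, ContinuousLinearMap.adjoint_inner_left,
      ContinuousLinearMap.id_apply]
    rw [hVapp, hVapp, inner_add_left, inner_add_right, inner_add_right]
    have t1 : ⟪U (Sinv x), U (Sinv y)⟫_ℂ = ⟪x, Sinv y⟫_ℂ := by
      rw [← hSip, h1']
    have t2 : ⟪U (Sinv x), Eop y⟫_ℂ = 0 := hUE _ _
    have t3 : ⟪Eop x, U (Sinv y)⟫_ℂ = 0 := by
      rw [← inner_conj_symm, hUE, map_zero]
    have t4 : ⟪Eop x, Eop y⟫_ℂ = ⟪x, y⟫_ℂ - ⟪x, Sinv y⟫_ℂ := by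
      rw [hEopInner, hGsym, hG2, hTapp, inner_sub_right]
    rw [t1, t2, t3, t4]
    ring
  · apply ContinuousLinearMap.ext
    intro x
    apply ext_inner_right ℂ
    intro y
    rw [ContinuousLinearMap.comp_apply, ContinuousLinearMap.adjoint_inner_left,
      ContinuousLinearMap.id_apply]
    rw [hVapp, inner_add_right]
    have t1 : ⟪U x, U (Sinv y)⟫_ℂ = ⟪x, y⟫_ℂ := by
      rw [← hSip, hSsym, h1']
    rw [t1, hUE, add_zero]
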